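/- Let N, d, k, r be positive integers with k ≤ N, and let rows : Fin r → (Fin N → Fin d) satisfy the packing property of strength k: for every subset T ⊆ Fin N with |T| = k, the map i ↦ (rows i) restricted to T is injective. Let a : Fin r → ℂ, let θ : Fin r → ℝ be arbitrary phases, let ψ be the state with ψ(rows i) = a_i (and 0 elsewhere), and let φ be the state with φ(rows i) = exp(√(−1)·θ_i) · a_i (and 0 elsewhere). Then ρ_S(φ) = ρ_S(ψ) for every subset S ⊆ Fin N with |S| = N − k; that is, all (N − k)-body marginals of such a state are invariant under arbitrary phase changes of its coefficients. -/

import Mathlib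

open Finset

/-- Combine `x` defined on `S` with `z` defined on the complement of `S`
into a full assignment `Fin N → Fin d`. -/
def joinFun {N d : ℕ} (S : Finset (Fin N))
    (x : {i // i ∈ S} → Fin d) (z : {i // i ∉ S} → Fin d) : Fin N → Fin d :=
  fun i => if h : i ∈ S then x ⟨i, h⟩ else z ⟨i, h⟩

/-- The marginal (reduced density matrix) of the pure state `ψ` on the parties `S`. -/
noncomputable def marginal {N d : ℕ} (S : Finset (Fin N)) (ψ : (Fin N → Fin d) → ℂ)
    (x y : {i // i ∈ S} → Fin d) : ℂ :=
  ∑ z : {i // i ∉ S} → Fin d,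
    ψ (joinFun S x z) * (starRingEnd ℂ) (ψ (joinFun S y z))

/-- `ψ` is a unit vector. -/
def UnitVec {N d : ℕ} (ψ : (Fin N → Fin d) → ℂ) : Prop :=
  ∑ x, ‖ψ x‖ ^ 2 = 1

/-- `ψ` is genuinely multipartite entangled. -/
def GME {N d : ℕ} (ψ : (Fin N → Fin d) → ℂ) : Prop :=
  ∀ J : Finset (Fin N), J.Nonempty → J ≠ Finset.univ →
    ¬ ∃ (α : ({i // i ∈ J} → Fin d) → ℂ) (β : ({i // i ∉ J} → Fin d) → ℂ),
      ∀ x z, ψ (joinFun J x z) = α x * β z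

/-- `ψ` is uniquely determined by the family of marginals `𝓕` among pure states. -/
def UDP {N d : ℕ} (𝓕 : Finset (Finset (Fin N))) (ψ : (Fin N → Fin d) → ℂ) : Prop :=
  ∀ φ : (Fin N → Fin d) → ℂ, UnitVec φ →
    (∀ F ∈ 𝓕, marginal F φ = marginal F ψ) →
    ∃ c : ℂ, ‖c‖ = 1 ∧ φ = c • ψ

/-- `rows` is a packing array of strength `k`: in any `k` columns, every `k`-tuple
appears at most once. -/
def IsPackingArray {r N d : ℕ} (k : ℕ) (rows : Fin r → (Fin N → Fin d)) : Prop :=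
  ∀ T : Finset (Fin N), T.card = k →
    Function.Injective (fun i : Fin r => fun j : {x // x ∈ T} => rows i j.1)

/-- All `(N - k)`-body marginals of a state supported on the rows
of a packing array of strength `k` are invariant under arbitrary phase changes
of its coefficients. -/
theorem packing_array_marginal_phase_invariant (N d k r : ℕ)
    (hN : 0 < N) (hd : 0 < d) (hk : 0 < k) (hr : 0 < r) (hkN : k ≤ N)
    (rows : Fin r → (Fin N → Fin d)) (hPA : IsPackingArray k rows)
    (a : Fin r → ℂ) (θ : Fin r → ℝ)
    (ψ φ : (Fin N → Fin d) → ℂ)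
    (hψrows : ∀ i, ψ (rows i) = a i)
    (hψzero : ∀ x : Fin N → Fin d, (∀ i, x ≠ rows i) → ψ x = 0)
    (hφrows : ∀ i, φ (rows i) = Complex.exp (Complex.I * (θ i : ℂ)) * a i)
    (hφzero : ∀ x : Fin N → Fin d, (∀ i, x ≠ rows i) → φ x = 0) :
    ∀ S : Finset (Fin N), S.card = N - k → marginal S φ = marginal S ψ := by
  intro S hS
  funext x y
  unfold marginal
  apply Finset.sum_congr rfl
  intro z _
  by_cases hx : ∃ i, joinFun S x z = rows i
  · obtain ⟨i, hi⟩ := hx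
    by_cases hy : ∃ j, joinFun S y z = rows j
    · obtain ⟨j, hj⟩ := hy
      have hij : i = j := by
        apply hPA Sᶜ
        · simp [Finset.card_compl, hS, Nat.sub_sub_self hkN]
        · funext m
          have hm : (m : Fin N) ∉ S := Finset.mem_compl.mp m.2
          have h1 : rows i m = z ⟨m, hm⟩ := by
            rw [← hi]; simp [joinFun, hm]
          have h2 : rows j m = z ⟨m, hm⟩ := by
            rw [← hj]; simp [joinFun, hm]
          simp [h1, h2]
      subst hij
      rw [hi, hj, hφrows, hψrows]
      have he : Complex.exp (Complex.I * (θ i : ℂ)) *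
          (starRingEnd ℂ) (Complex.exp (Complex.I * (θ i : ℂ))) = 1 := by
        rw [← Complex.exp_conj, ← Complex.exp_add]
        simp
      rw [map_mul, show Complex.exp (Complex.I * (θ i : ℂ)) * a i *
        ((starRingEnd ℂ) (Complex.exp (Complex.I * (θ i : ℂ))) * (starRingEnd ℂ) (a i)) =
        (Complex.exp (Complex.I * (θ i : ℂ)) *
          (starRingEnd ℂ) (Complex.exp (Complex.I * (θ i : ℂ)))) *
        (a i * (starRingEnd ℂ) (a i)) from by ring, he, one_mul]
    · push_neg at hy
      rw [hφzero _ hy, hψzero _ hy]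
      simp
  · push_neg at hx
    rw [hφzero _ hx, hψzero _ hx]
    simp
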